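/- Let (A, 𝒜) be a measurable space with probability measure μ, let τ ≥ 1, γ > 0, κ ≥ 1, β ∈ ℝ, and let f̂ : A → [0,1] be measurable. Let P be the probability measure with density dP/dμ(a) = κτ / (1 + γ·max(0, f̂(a) − β)) (assume κ is such that this density integrates to 1 with respect to μ). Let Q be any probability measure with Q ≪ μ and dQ/dμ ≤ τ μ-almost everywhere. Then for every measurable f : A → [0,1], ∫ f dP − ∫ f dQ − (γ/4)·∫ (f̂(a) − f(a))² dP(a) ≤ κτ/γ. -/

import Mathlib

open MeasureTheory

open scoped NNReal ENNReal

lemma capped_igw_aux (γ m p q x : ℝ) (hγ : 0 < γ) (hm0 : 0 < m) (hp0 : 0 < p)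
    (hq0 : 0 ≤ q) (hqc : q ≤ p * (1 + γ * m)) :
    ((m - x) * (p - q) - γ / 4 * x ^ 2 * p) * γ ≤ p * (1 + γ * m) := by
  rcases le_or_gt x m with hxm | hxm
  · nlinarith [mul_nonneg (mul_nonneg hγ.le (sub_nonneg.2 hxm)) hq0,
      mul_nonneg hp0.le (sq_nonneg (γ*x + 2))]
  · nlinarith [mul_nonneg (mul_nonneg hγ.le (sub_nonneg.2 hxm.le)) (sub_nonneg.2 hqc),
      mul_nonneg (mul_nonneg (mul_nonneg hγ.le hγ.le) hp0.le) (sq_nonneg (x - 2*m)),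
      hp0.le, mul_nonneg (mul_nonneg hγ.le hm0.le) hp0.le]

lemma capped_igw_ptwise {γ c β f g q : ℝ} (hγ : 0 < γ) (hc : 1 ≤ c) (hq0 : 0 ≤ q) (hqc : q ≤ c) :
    (f - β) * (c / (1 + γ * max 0 (g - β)) - q)
      - γ / 4 * (g - f) ^ 2 * (c / (1 + γ * max 0 (g - β))) ≤ c / γ := by
  have hc0 : (0:ℝ) < c := lt_of_lt_of_le one_pos hc
  rcases le_or_gt g β with hgβ | hgβ
  · rw [show max 0 (g - β) = 0 from max_eq_left (by linarith)]
    rw [le_div_iff₀ hγ]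
    simp only [mul_zero, add_zero, div_one]
    rcases le_or_gt f g with hfg | hfg
    · nlinarith [mul_nonneg (mul_nonneg hγ.le (sub_nonneg.2 hfg)) (sub_nonneg.2 hqc),
        mul_nonneg (mul_nonneg hγ.le (sub_nonneg.2 hgβ)) (sub_nonneg.2 hqc),
        mul_nonneg (mul_nonneg (mul_nonneg hγ.le hγ.le) hc0.le) (sq_nonneg (g - f)), hc0]
    · nlinarith [mul_nonneg hc0.le (sq_nonneg (γ*(f-g) - 2)),
        mul_nonneg hγ.le (mul_nonneg hq0 (sub_nonneg.2 hfg.le)),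
        mul_nonneg (mul_nonneg hγ.le (sub_nonneg.2 hgβ)) (sub_nonneg.2 hqc)]
  · have hmax : max 0 (g - β) = g - β := max_eq_right (by linarith)
    have hm0 : 0 < g - β := by linarith
    have hden : (0:ℝ) < 1 + γ * (g - β) := by nlinarith
    have hp0 : 0 < c / (1 + γ * (g - β)) := div_pos hc0 hden
    have hpc : c / (1 + γ * (g - β)) * (1 + γ * (g - β)) = c :=
      div_mul_cancel₀ _ (ne_of_gt hden)
    rw [hmax, le_div_iff₀ hγ]
    have hfβ : f - β = (g - β) - (g - f) := by ring
    rw [hfβ]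
    have H := capped_igw_aux γ (g - β) (c / (1 + γ * (g - β))) q (g - f) hγ hm0 hp0 hq0
      (by rw [hpc]; exact hqc)
    rw [hpc] at H
    exact H


/-- Bound on the Decision-Estimation Coefficient for the CappedIGW sampling
distribution `P` with density `κτ / (1 + γ·(f̂(a) − β)₊)` w.r.t. `μ`: for any
τ-smooth competitor `Q` (i.e. `Q ≪ μ` with `dQ/dμ ≤ τ` μ-a.e.) and any
measurable `f : A → [0,1]`,
`∫ f dP − ∫ f dQ − (γ/4)·∫ (f̂ − f)² dP ≤ κτ/γ`. -/
theorem stmt_5 {A : Type*} [MeasurableSpace A]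
    (μ : Measure A) [IsProbabilityMeasure μ]
    (τ γ κ β : ℝ) (hτ : 1 ≤ τ) (hγ : 0 < γ) (hκ : 1 ≤ κ)
    (fhat : A → ℝ) (hfhat : Measurable fhat)
    (hfhat01 : ∀ a, fhat a ∈ Set.Icc (0 : ℝ) 1)
    (P : Measure A)
    (hP : P = μ.withDensity
      (fun a => ENNReal.ofReal (κ * τ / (1 + γ * max 0 (fhat a - β)))))
    (hPprob : IsProbabilityMeasure P)
    (Q : Measure A) [IsProbabilityMeasure Q] (hQμ : Q ≪ μ)
    (hQτ : ∀ᵐ a ∂μ, (Q.rnDeriv μ a).toReal ≤ τ)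
    (f : A → ℝ) (hf : Measurable f) (hf01 : ∀ a, f a ∈ Set.Icc (0 : ℝ) 1) :
    ∫ a, f a ∂P - ∫ a, f a ∂Q - (γ / 4) * ∫ a, (fhat a - f a) ^ 2 ∂P
      ≤ κ * τ / γ := by
  haveI := hPprob
  set c : ℝ := κ * τ with hcdef
  have hc1 : (1:ℝ) ≤ c := by nlinarith
  have hc0 : (0:ℝ) < c := lt_of_lt_of_le one_pos hc1
  set p : A → ℝ := fun a => c / (1 + γ * max 0 (fhat a - β)) with hpdef
  have hden : ∀ a, (0:ℝ) < 1 + γ * max 0 (fhat a - β) := fun a => by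
    nlinarith [le_max_left (0:ℝ) (fhat a - β)]
  have hp0 : ∀ a, 0 < p a := fun a => div_pos hc0 (hden a)
  have hplec : ∀ a, p a ≤ c := fun a =>
    div_le_self hc0.le (by nlinarith [le_max_left (0:ℝ) (fhat a - β)])
  have hp_meas : Measurable p :=
    measurable_const.div ((measurable_const.add
      (measurable_const.mul (measurable_const.max (hfhat.sub measurable_const)))))
  -- integrals w.r.t. P as integrals w.r.t. μ
  have hPint : ∀ gg : A → ℝ, ∫ a, gg a ∂P = ∫ a, p a * gg a ∂μ := by
    intro gg
    have hP' : P = μ.withDensity (fun a => ((Real.toNNReal (p a) : ℝ≥0) : ℝ≥0∞)) := hP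
    rw [hP', integral_withDensity_eq_integral_smul hp_meas.real_toNNReal gg]
    refine integral_congr_ae (Filter.Eventually.of_forall fun a => ?_)
    simp [NNReal.smul_def, Real.coe_toNNReal _ (hp0 a).le]
  set q : A → ℝ := fun a => (Q.rnDeriv μ a).toReal with hqdef
  have hq_meas : Measurable q := (Measure.measurable_rnDeriv Q μ).ennreal_toReal
  have hq0 : ∀ a, 0 ≤ q a := fun a => ENNReal.toReal_nonneg
  have hQint : ∫ a, f a ∂Q = ∫ a, q a * f a ∂μ := by
    rw [← MeasureTheory.integral_rnDeriv_smul hQμ]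
    simp [smul_eq_mul]
    rfl
  have hp1 : ∫ a, p a ∂μ = 1 := by
    have h := hPint (fun _ => (1:ℝ))
    simpa using h.symm
  have hq1 : ∫ a, q a ∂μ = 1 := by
    rw [hqdef]
    rw [Measure.integral_toReal_rnDeriv hQμ]
    simp
  -- integrability facts
  have hbdd : ∀ (g : A → ℝ) (C : ℝ), Measurable g → (∀ᵐ a ∂μ, ‖g a‖ ≤ C) →
      Integrable g μ := fun g C hg hb => (integrable_const C).mono' hg.aestronglyMeasurable hb
  have I1 : Integrable (fun a => p a * f a) μ := by
    refine hbdd _ c (hp_meas.mul hf) (Filter.Eventually.of_forall fun a => ?_)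
    have h1 := (hf01 a).1; have h2 := (hf01 a).2; have h3 := (hp0 a).le; have h4 := hplec a
    rw [Real.norm_eq_abs, abs_of_nonneg (by positivity)]
    nlinarith
  have I2 : Integrable (fun a => q a * f a) μ := by
    refine hbdd _ τ (hq_meas.mul hf) ?_
    filter_upwards [hQτ] with a ha
    have h1 := (hf01 a).1; have h2 := (hf01 a).2; have h3 := hq0 a
    rw [Real.norm_eq_abs, abs_of_nonneg (by positivity)]
    nlinarith
  have I3 : Integrable (fun a => p a * (fhat a - f a) ^ 2) μ := by
    refine hbdd _ c (hp_meas.mul ((hfhat.sub hf).pow_const 2)) ?_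
    refine Filter.Eventually.of_forall fun a => ?_
    have h1 := (hf01 a).1; have h2 := (hf01 a).2
    have h3 := (hfhat01 a).1; have h4 := (hfhat01 a).2
    have h5 := (hp0 a).le; have h6 := hplec a
    rw [Real.norm_eq_abs, abs_of_nonneg (by positivity)]
    have hx2 : (fhat a - f a) ^ 2 ≤ 1 := by nlinarith
    nlinarith [mul_le_mul_of_nonneg_left hx2 h5]
  have Ip : Integrable p μ := by
    refine hbdd _ c hp_meas (Filter.Eventually.of_forall fun a => ?_)
    rw [Real.norm_eq_abs, abs_of_nonneg (hp0 a).le]; exact hplec a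
  have Iq : Integrable q μ := by
    refine hbdd _ τ hq_meas ?_
    filter_upwards [hQτ] with a ha
    rw [Real.norm_eq_abs, abs_of_nonneg (hq0 a)]; exact ha
  -- the key function W
  set W : A → ℝ := fun a =>
    (f a - β) * (p a - q a) - γ / 4 * (fhat a - f a) ^ 2 * p a with hWdef
  have hWeq : W = fun a => (p a * f a - q a * f a - γ / 4 * (p a * (fhat a - f a) ^ 2)
      - β * p a) + β * q a := by
    funext a; rw [hWdef]; ring
  have IW : Integrable W μ := by
    rw [hWeq]
    exact (((I1.sub I2).sub (I3.const_mul (γ/4))).sub (Ip.const_mul β)).add (Iq.const_mul β)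
  have hWint : ∫ a, W a ∂μ = ∫ a, p a * f a ∂μ - ∫ a, q a * f a ∂μ
      - γ / 4 * ∫ a, p a * (fhat a - f a) ^ 2 ∂μ - β * ∫ a, p a ∂μ + β * ∫ a, q a ∂μ := by
    have J1 : Integrable (fun a => p a * f a - q a * f a) μ := I1.sub I2
    have J2 : Integrable (fun a => p a * f a - q a * f a
        - γ / 4 * (p a * (fhat a - f a) ^ 2)) μ := J1.sub (I3.const_mul (γ/4))
    have J3 : Integrable (fun a => p a * f a - q a * f a
        - γ / 4 * (p a * (fhat a - f a) ^ 2) - β * p a) μ := J2.sub (Ip.const_mul β)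
    rw [hWeq, integral_add J3 (Iq.const_mul β), integral_sub J2 (Ip.const_mul β),
      integral_sub J1 (I3.const_mul (γ/4)), integral_sub I1 I2,
      integral_const_mul, integral_const_mul, integral_const_mul]
  -- rewrite the goal
  rw [hPint f, hQint, hPint (fun a => (fhat a - f a) ^ 2)]
  have hgoal : ∫ a, p a * f a ∂μ - ∫ a, q a * f a ∂μ
      - γ / 4 * ∫ a, p a * (fhat a - f a) ^ 2 ∂μ = ∫ a, W a ∂μ := by
    rw [hWint, hp1, hq1]; ring
  rw [hgoal]
  have hbound : ∫ a, W a ∂μ ≤ ∫ _a, c / γ ∂μ := by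
    refine integral_mono_ae IW (integrable_const _) ?_
    filter_upwards [hQτ] with a ha
    exact capped_igw_ptwise hγ hc1 (hq0 a) (ha.trans (by nlinarith))
  calc ∫ a, W a ∂μ ≤ ∫ _a, c / γ ∂μ := hbound
    _ = c / γ := by simp
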